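/- Let (Ω, ℱ, ℙ) be a probability space, H a real Hilbert space, Π : H → H an orthogonal projection, and fix constants δ ∈ (0,1), p ≥ 1 and C > 0. Suppose that for each ω ∈ Ω, M(ω) is a bounded self-adjoint positive operator on H, and that γ(ω) > 0 and β(ω) > 0 are random variables such that: (a) almost surely, ⟨M(ω)ξ, ξ⟩ ≥ γ(ω)‖ξ‖² for every ξ ∈ H with ‖Πξ‖ ≥ δ‖ξ‖; and (b) ℙ(β ≥ δ²γ) ≤ C δ^p. Define R(ω) = β(ω)(β(ω)·Id + M(ω))^{-1} and assume that ω ↦ ‖Π ∘ R(ω)‖ is measurable. Then E ‖Π ∘ R‖^p ≤ (1 + C) δ^p. -/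

import Mathlib

open MeasureTheory
open scoped RealInnerProductSpace ENNReal

/-- Corollary 5.5 (first part): if for a.e. `ω` the random bounded self-adjoint positive
operator `M(ω)` satisfies the cone bound `⟨M(ω)ξ, ξ⟩ ≥ γ(ω)‖ξ‖²` on `{ξ : ‖Πξ‖ ≥ δ‖ξ‖}` and
`ℙ(β ≥ δ²γ) ≤ C δ^p`, then the regularized inverse `R(ω) = β(ω)(β(ω) + M(ω))⁻¹` satisfies
`E ‖Π ∘ R‖^p ≤ (1 + C) δ^p`. -/
theorem stmt3 {Ω : Type*} [MeasurableSpace Ω] (ℙ : Measure Ω) [IsProbabilityMeasure ℙ]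
    {H : Type*} [NormedAddCommGroup H] [InnerProductSpace ℝ H] [CompleteSpace H]
    (P : H →L[ℝ] H)
    (hP_idem : P ∘L P = P)
    (hP_sa : ∀ x y : H, ⟪P x, y⟫ = ⟪x, P y⟫)
    {δ p C : ℝ} (hδ : δ ∈ Set.Ioo (0:ℝ) 1) (hp : 1 ≤ p) (hC : 0 < C)
    (M : Ω → H →L[ℝ] H) (γ β : Ω → ℝ)
    (hM_sa : ∀ ω : Ω, ∀ x y : H, ⟪M ω x, y⟫ = ⟪x, M ω y⟫)
    (hM_pos : ∀ ω : Ω, ∀ ξ : H, 0 ≤ ⟪M ω ξ, ξ⟫)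
    (hγ : ∀ ω, 0 < γ ω) (hβ : ∀ ω, 0 < β ω)
    (hcone : ∀ᵐ ω ∂ℙ, ∀ ξ : H, δ * ‖ξ‖ ≤ ‖P ξ‖ → γ ω * ‖ξ‖ ^ 2 ≤ ⟪M ω ξ, ξ⟫)
    (hprob : ℙ {ω | δ ^ 2 * γ ω ≤ β ω} ≤ ENNReal.ofReal (C * δ ^ p))
    (Tinv : Ω → H →L[ℝ] H)
    (hTinv₁ : ∀ ω, (β ω • (1 : H →L[ℝ] H) + M ω) ∘L Tinv ω = 1)
    (hTinv₂ : ∀ ω, Tinv ω ∘L (β ω • (1 : H →L[ℝ] H) + M ω) = 1)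
    (hmeas : Measurable fun ω => ‖P ∘L (β ω • Tinv ω)‖) :
    ∫⁻ ω, ENNReal.ofReal (‖P ∘L (β ω • Tinv ω)‖ ^ p) ∂ℙ ≤
      ENNReal.ofReal ((1 + C) * δ ^ p) := by
  obtain ⟨hδ0, hδ1⟩ := hδ
  -- P is a contraction
  have hPle : ∀ x : H, ‖P x‖ ≤ ‖x‖ := by
    intro x
    rcases eq_or_lt_of_le (norm_nonneg (P x)) with h0 | h0
    · rw [← h0]; exact norm_nonneg x
    · have h1 : ‖P x‖ ^ 2 = ⟪x, P x⟫ := by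
        have h2 : ⟪P x, P x⟫ = ⟪x, P (P x)⟫ := hP_sa x (P x)
        have h3 : P (P x) = P x := by
          have := congrArg (fun T : H →L[ℝ] H => T x) hP_idem
          simpa using this
        rw [h3] at h2
        rw [← real_inner_self_eq_norm_sq, h2]
      have h4 : ⟪x, P x⟫ ≤ ‖x‖ * ‖P x‖ := real_inner_le_norm x (P x)
      have h5 : ‖P x‖ * ‖P x‖ ≤ ‖x‖ * ‖P x‖ := by nlinarith
      exact le_of_mul_le_mul_right h5 h0
  -- the inverse identity, applied pointwise
  have hid : ∀ ω (x : H), β ω • Tinv ω x + M ω (Tinv ω x) = x := by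
    intro ω x
    have h := congrArg (fun T : H →L[ℝ] H => T x) (hTinv₁ ω)
    simpa using h
  -- contraction of R
  have hR_le : ∀ ω (x : H), β ω * ‖Tinv ω x‖ ≤ ‖x‖ := by
    intro ω x
    set y := Tinv ω x with hy
    have hx : β ω • y + M ω y = x := hid ω x
    have expand : ⟪β ω • y + M ω y, β ω • y + M ω y⟫
        = β ω ^ 2 * ⟪y, y⟫ + 2 * (β ω * ⟪M ω y, y⟫) + ⟪M ω y, M ω y⟫ := by
      simp only [inner_add_add_self, real_inner_smul_left, real_inner_smul_right,
        real_inner_comm ((M ω) y) y]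
      ring
    have hsq : (β ω * ‖y‖) ^ 2 ≤ ‖x‖ ^ 2 := by
      have h1 : ‖x‖ ^ 2 = ⟪x, x⟫ := (real_inner_self_eq_norm_sq x).symm
      rw [h1, ← hx, expand, real_inner_self_eq_norm_sq y]
      have h2 : (0:ℝ) ≤ ⟪M ω y, y⟫ := hM_pos ω y
      have h3 : (0:ℝ) ≤ ⟪M ω y, M ω y⟫ := real_inner_self_nonneg
      nlinarith [(hβ ω).le]
    have hb : 0 ≤ β ω * ‖y‖ := mul_nonneg (hβ ω).le (norm_nonneg y)
    nlinarith [norm_nonneg x]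
  -- pointwise norm of composite applied to x
  have happ : ∀ ω (x : H), ‖(P ∘L (β ω • Tinv ω)) x‖ = β ω * ‖P (Tinv ω x)‖ := by
    intro ω x
    have : (P ∘L (β ω • Tinv ω)) x = β ω • P (Tinv ω x) := by
      simp [_root_.map_smul]
    rw [this, norm_smul, Real.norm_eq_abs, abs_of_pos (hβ ω)]
  -- global bound: ‖P ∘ R‖ ≤ 1
  have hnorm1 : ∀ ω, ‖P ∘L (β ω • Tinv ω)‖ ≤ 1 := by
    intro ω
    apply ContinuousLinearMap.opNorm_le_bound _ zero_le_one
    intro x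
    rw [happ, one_mul]
    calc β ω * ‖P (Tinv ω x)‖ ≤ β ω * ‖Tinv ω x‖ :=
          mul_le_mul_of_nonneg_left (hPle _) (hβ ω).le
      _ ≤ ‖x‖ := hR_le ω x
  -- good-event bound: ‖P ∘ R‖ ≤ δ
  have hnormδ : ∀ ω, (∀ ξ : H, δ * ‖ξ‖ ≤ ‖P ξ‖ → γ ω * ‖ξ‖ ^ 2 ≤ ⟪M ω ξ, ξ⟫) →
      β ω < δ ^ 2 * γ ω → ‖P ∘L (β ω • Tinv ω)‖ ≤ δ := by
    intro ω hconeω hβγ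
    apply ContinuousLinearMap.opNorm_le_bound _ hδ0.le
    intro x
    rw [happ]
    set y := Tinv ω x with hy
    by_cases hcase : δ * ‖y‖ ≤ ‖P y‖
    · -- cone applies
      have hMy : γ ω * ‖y‖ ^ 2 ≤ ⟪M ω y, y⟫ := hconeω y hcase
      rcases eq_or_lt_of_le (norm_nonneg y) with h0 | h0
      · have hle0 : ‖P y‖ ≤ 0 := by
          calc ‖P y‖ ≤ ‖y‖ := hPle y
            _ = 0 := h0.symm
        have hPy0 : ‖P y‖ = 0 := le_antisymm hle0 (norm_nonneg _)
        rw [hPy0, mul_zero]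
        exact mul_nonneg hδ0.le (norm_nonneg x)
      · have hxy : ⟪x, y⟫ ≤ ‖x‖ * ‖y‖ := real_inner_le_norm x y
        have hxy2 : γ ω * ‖y‖ ^ 2 ≤ ⟪x, y⟫ := by
          have hx : β ω • y + M ω y = x := hid ω x
          have : ⟪x, y⟫ = β ω * ⟪y, y⟫ + ⟪M ω y, y⟫ := by
            rw [← hx, inner_add_left, real_inner_smul_left]
          rw [this]
          have h1 : (0:ℝ) ≤ β ω * ⟪y, y⟫ :=
            mul_nonneg (hβ ω).le real_inner_self_nonneg
          linarith
        have hylex : γ ω * ‖y‖ ≤ ‖x‖ := by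
          have h1 : γ ω * ‖y‖ * ‖y‖ ≤ ‖x‖ * ‖y‖ := by nlinarith
          exact le_of_mul_le_mul_right h1 h0
        have h2 : β ω * ‖P y‖ ≤ β ω * ‖y‖ :=
          mul_le_mul_of_nonneg_left (hPle y) (hβ ω).le
        have h3 : β ω * ‖y‖ ≤ δ ^ 2 * (γ ω * ‖y‖) := by nlinarith
        have h4 : δ ^ 2 * (γ ω * ‖y‖) ≤ δ ^ 2 * ‖x‖ := by nlinarith
        have hδδ : δ ^ 2 ≤ δ := by nlinarith
        have h5 : δ ^ 2 * ‖x‖ ≤ δ * ‖x‖ :=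
          mul_le_mul_of_nonneg_right hδδ (norm_nonneg x)
        linarith
    · push_neg at hcase
      calc β ω * ‖P y‖ ≤ β ω * (δ * ‖y‖) :=
            mul_le_mul_of_nonneg_left hcase.le (hβ ω).le
        _ = δ * (β ω * ‖y‖) := by ring
        _ ≤ δ * ‖x‖ := mul_le_mul_of_nonneg_left (hR_le ω x) hδ0.le
  -- integral estimate
  set bad : Set Ω := {ω | δ ^ 2 * γ ω ≤ β ω} with hbad
  have hδp_pos : (0:ℝ) < δ ^ p := Real.rpow_pos_of_pos hδ0 p
  have hae : ∀ᵐ ω ∂ℙ, ENNReal.ofReal (‖P ∘L (β ω • Tinv ω)‖ ^ p)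
      ≤ ENNReal.ofReal (δ ^ p) + bad.indicator (fun _ => (1 : ℝ≥0∞)) ω := by
    filter_upwards [hcone] with ω hconeω
    by_cases hb : ω ∈ bad
    · rw [Set.indicator_of_mem hb]
      have h1 : ‖P ∘L (β ω • Tinv ω)‖ ^ p ≤ 1 :=
        Real.rpow_le_one (norm_nonneg _) (hnorm1 ω) (by linarith)
      calc ENNReal.ofReal (‖P ∘L (β ω • Tinv ω)‖ ^ p) ≤ ENNReal.ofReal 1 :=
            ENNReal.ofReal_le_ofReal h1
        _ = 1 := ENNReal.ofReal_one
        _ ≤ ENNReal.ofReal (δ ^ p) + 1 := le_add_self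
    · rw [Set.indicator_of_notMem hb, add_zero]
      have hβγ : β ω < δ ^ 2 * γ ω := lt_of_not_ge hb
      exact ENNReal.ofReal_le_ofReal
        (Real.rpow_le_rpow (norm_nonneg _) (hnormδ ω hconeω hβγ) (by linarith))
  calc ∫⁻ ω, ENNReal.ofReal (‖P ∘L (β ω • Tinv ω)‖ ^ p) ∂ℙ
      ≤ ∫⁻ ω, (ENNReal.ofReal (δ ^ p) + bad.indicator (fun _ => (1 : ℝ≥0∞)) ω) ∂ℙ :=
        lintegral_mono_ae hae
    _ = ENNReal.ofReal (δ ^ p) + ∫⁻ ω, bad.indicator (fun _ => (1 : ℝ≥0∞)) ω ∂ℙ := by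
        rw [lintegral_add_left measurable_const, lintegral_const, measure_univ, mul_one]
    _ ≤ ENNReal.ofReal (δ ^ p) + 1 * ℙ bad :=
        add_le_add_right (lintegral_indicator_const_le bad 1) _
    _ ≤ ENNReal.ofReal (δ ^ p) + ENNReal.ofReal (C * δ ^ p) := by
        rw [one_mul]; exact add_le_add_right hprob _
    _ = ENNReal.ofReal ((1 + C) * δ ^ p) := by
        rw [← ENNReal.ofReal_add hδp_pos.le (by positivity)]
        ring_nf
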